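/- Let A be the arc set of the m-diagram of a three-row standard Young tableau with rows B, M, T, and let δ be the circle-depth difference function. Then: (a) if i = f₁(j) for some j ∈ M (i.e., i is the first boundary vertex of an m or of an isolated arc), then δ(i) = 1; (b) if j ∈ M and j = f₂(k) for some k ∈ T (i.e., j is the second boundary vertex of an m), then δ(j) = 0; (c) if k ∈ T, or k ∈ M and k is not in the image of f₂ (i.e., k is the last boundary vertex of an m or of an isolated arc), then δ(k) = −1. -/

import Mathlib

open scoped Classical

/-- The `j`-th smallest element (0-indexed) of a finite set of naturals (default `0`). -/
noncomputable def nthSmallest (s : Finset ℕ) (j : ℕ) : ℕ := (s.sort (· ≤ ·)).getD j 0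

/-- `(R, S)` satisfies the tableau condition: `|S| ≤ |R|` and for every `j ≤ |S|`, the `j`-th
smallest element of `S` is greater than the `j`-th smallest element of `R`. -/
def TableauCond (R S : Finset ℕ) : Prop :=
  S.card ≤ R.card ∧ ∀ j < S.card, nthSmallest R j < nthSmallest S j

/-- The greedy matching of `S` into `R`: processing the elements `i` of `S` in increasing
order, `greedy R S i = max { j ∈ R : j < i and j ≠ greedy R S i' for every i' ∈ S with i' < i }`
(with value `0` when this set is empty or `i ∉ S`). -/
noncomputable def greedy (R S : Finset ℕ) (i : ℕ) : ℕ :=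
  Nat.strongRecOn i fun i ih =>
    WithBot.unbotD 0 ((R.filter fun j => j < i ∧ ∀ i' (_ : i' ∈ S) (h : i' < i), j ≠ ih i' h).max)

/-- The arcs produced by the greedy matching of `S` into `R`, as ordered pairs
`(left endpoint, right endpoint)`. -/
noncomputable def arcsOf (R S : Finset ℕ) : Finset (ℕ × ℕ) :=
  S.image fun i => (greedy R S i, i)

/-- `(B, M, T)` (bottom, middle, top rows) encodes a three-row standard Young tableau with
`N` boxes: the rows partition `{1,…,N}`, row lengths weakly decrease from bottom to top, and
consecutive rows satisfy the tableau condition. -/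
def ThreeRowSYT (N : ℕ) (B M T : Finset ℕ) : Prop :=
  Disjoint B M ∧ Disjoint B T ∧ Disjoint M T ∧
  B ∪ M ∪ T = Finset.Icc 1 N ∧
  T.card ≤ M.card ∧ M.card ≤ B.card ∧
  TableauCond B M ∧ TableauCond M T

/-- Two arcs `(p,q)` and `(p',q')` (with `p<q`, `p'<q'`) cross if `p<p'<q<q'` or
`p'<p<q'<q`. -/
def Cross (a b : ℕ × ℕ) : Prop :=
  (a.1 < b.1 ∧ b.1 < a.2 ∧ a.2 < b.2) ∨ (b.1 < a.1 ∧ a.1 < b.2 ∧ b.2 < a.2)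

/-- `d(i+ε)`: the number of arcs `(a,b) ∈ A` with `a ≤ i < b`. -/
noncomputable def dPlus (A : Finset (ℕ × ℕ)) (i : ℕ) : ℕ :=
  (A.filter fun a => a.1 ≤ i ∧ i < a.2).card

/-- `d(i−ε)`: the number of arcs `(a,b) ∈ A` with `a < i ≤ b`. -/
noncomputable def dMinus (A : Finset (ℕ × ℕ)) (i : ℕ) : ℕ :=
  (A.filter fun a => a.1 < i ∧ i ≤ a.2).card

/-- The circle-depth difference function `δ(i) = d(i+ε) − d(i−ε)`. -/
noncomputable def deltaDepth (A : Finset (ℕ × ℕ)) (i : ℕ) : ℤ :=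
  (dPlus A i : ℤ) - (dMinus A i : ℤ)


section Helpers

lemma greedy_eq' (R S : Finset ℕ) (i : ℕ) :
    greedy R S i
      = WithBot.unbotD 0 ((R.filter fun j => j < i ∧ ∀ i' ∈ S, i' < i → j ≠ greedy R S i').max) := by
  conv_lhs => rw [greedy, Nat.strongRecOn]
  rw [WellFounded.fix_eq]
  rfl

lemma card_filter_eq_length (s : Finset ℕ) (p : ℕ → Prop) [DecidablePred p] :
    (s.filter p).card = ((s.sort (· ≤ ·)).filter (fun x => decide (p x))).length := by
  rw [← List.countP_eq_length_filter, ← Multiset.coe_countP, Finset.sort_eq]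
  simp [Finset.filter, Multiset.countP_eq_card_filter, Finset.card]

lemma sorted_count_lt (s : Finset ℕ) (j : ℕ) (hj : j < s.card) :
    (s.filter (· < nthSmallest s j)).card = j := by
  set l := s.sort (· ≤ ·) with hl
  have hlen : l.length = s.card := Finset.length_sort _
  have hjl : j < l.length := by omega
  have hpair := List.pairwise_iff_getElem.mp (Finset.sortedLT_sort s).pairwise
  rw [← hl] at hpair
  have hnth : nthSmallest s j = l[j] := List.getD_eq_getElem l 0 hjl
  obtain ⟨v, hv⟩ : ∃ v, v = l[j] := ⟨_, rfl⟩
  rw [card_filter_eq_length, ← hl, hnth, ← hv]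
  have h1 : (l.take j).filter (fun x => decide (x < v)) = l.take j := by
    apply List.filter_eq_self.mpr
    intro a ha
    obtain ⟨k, hk, rfl⟩ := List.mem_iff_getElem.mp ha
    rw [List.getElem_take]
    have hkj : k < j := by have := hk; rw [List.length_take] at this; omega
    simp only [decide_eq_true_eq]
    rw [hv]
    exact hpair k j (by omega) hjl hkj
  have h2 : (l.drop j).filter (fun x => decide (x < v)) = [] := by
    apply List.filter_eq_nil_iff.mpr
    intro a ha
    obtain ⟨k, hk, rfl⟩ := List.mem_iff_getElem.mp ha
    rw [List.getElem_drop]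
    have hkd : k < l.length - j := by have := hk; rw [List.length_drop] at this; omega
    simp only [decide_eq_true_eq]
    rw [hv]
    rcases Nat.eq_zero_or_pos k with rfl | hk0
    · simp only [Nat.add_zero]; omega
    · exact Nat.not_lt.mpr (hpair j (j + k) hjl (by omega) (by omega)).le
  conv_lhs => rw [← List.take_append_drop j l]
  rw [List.filter_append, h1, h2, List.length_append, List.length_take]
  simp; omega

lemma nthSmallest_count (s : Finset ℕ) {i : ℕ} (hi : i ∈ s) :
    nthSmallest s ((s.filter (· < i)).card) = i := by
  have hmem : i ∈ s.sort (· ≤ ·) := (Finset.mem_sort _).mpr hi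
  obtain ⟨m, hm, hgm⟩ := List.mem_iff_getElem.mp hmem
  have hms : m < s.card := by rwa [Finset.length_sort] at hm
  have hc := sorted_count_lt s m hms
  have hnth : nthSmallest s m = i := by
    rw [nthSmallest, List.getD_eq_getElem _ 0 hm, hgm]
  rw [hnth] at hc
  rw [hc, hnth]

lemma count_lt_of_gt (s : Finset ℕ) {j x : ℕ} (hj : j < s.card) (hx : nthSmallest s j < x) :
    j + 1 ≤ (s.filter (· < x)).card := by
  set l := s.sort (· ≤ ·) with hl
  have hlen : l.length = s.card := Finset.length_sort _
  have hjl : j < l.length := by omega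
  have hpair := List.pairwise_iff_getElem.mp (Finset.sortedLT_sort s).pairwise
  rw [← hl] at hpair
  have hnth : nthSmallest s j = l[j] := List.getD_eq_getElem l 0 hjl
  rw [hnth] at hx
  rw [card_filter_eq_length, ← hl]
  have h1 : (l.take (j+1)).filter (fun y => decide (y < x)) = l.take (j+1) := by
    apply List.filter_eq_self.mpr
    intro a ha
    obtain ⟨k, hk, rfl⟩ := List.mem_iff_getElem.mp ha
    rw [List.getElem_take]
    have hkj : k ≤ j := by have := hk; rw [List.length_take] at this; omega
    simp only [decide_eq_true_eq]
    rcases eq_or_lt_of_le hkj with rfl | hlt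
    · exact hx
    · exact lt_trans (hpair k j (by omega) hjl hlt) hx
  conv_rhs => rw [← List.take_append_drop (j+1) l]
  rw [List.filter_append, List.length_append, h1, List.length_take]
  omega

lemma count_lt (R S : Finset ℕ) (h : TableauCond R S) {i : ℕ} (hi : i ∈ S) :
    (S.filter (· < i)).card < (R.filter (· < i)).card := by
  set j := (S.filter (· < i)).card with hj
  have hjS : j < S.card := by
    have hsub : S.filter (· < i) ⊂ S := by
      refine Finset.ssubset_iff_of_subset (Finset.filter_subset _ _) |>.mpr ⟨i, hi, by simp⟩
    exact Finset.card_lt_card hsub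
  have h1 : nthSmallest S j = i := nthSmallest_count S hi
  have h2 : nthSmallest R j < i := h1 ▸ h.2 j hjS
  have := count_lt_of_gt R (lt_of_lt_of_le hjS h.1) h2
  omega

lemma greedy_spec (R S : Finset ℕ) (h : TableauCond R S) {i : ℕ} (hi : i ∈ S) :
    greedy R S i ∈ R ∧ greedy R S i < i ∧
      ∀ i' ∈ S, i' < i → greedy R S i ≠ greedy R S i' := by
  classical
  set F := R.filter (fun j => j < i ∧ ∀ i' ∈ S, i' < i → j ≠ greedy R S i') with hF
  have hsub : (R.filter (· < i)) \ ((S.filter (· < i)).image (greedy R S)) ⊆ F := by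
    intro r hr
    rw [Finset.mem_sdiff, Finset.mem_filter] at hr
    rw [hF, Finset.mem_filter]
    refine ⟨hr.1.1, hr.1.2, fun i' hi' hlt heq => hr.2 ?_⟩
    exact Finset.mem_image.mpr ⟨i', Finset.mem_filter.mpr ⟨hi', hlt⟩, heq.symm⟩
  have hcard : 0 < F.card := by
    have h1 := count_lt R S h hi
    have h2 : ((S.filter (· < i)).image (greedy R S)).card ≤ (S.filter (· < i)).card :=
      Finset.card_image_le
    have h3 := Finset.le_card_sdiff ((S.filter (· < i)).image (greedy R S)) (R.filter (· < i))
    have := Finset.card_le_card hsub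
    omega
  obtain ⟨m, hm⟩ := Finset.max_of_nonempty (Finset.card_pos.mp hcard)
  have hmF : m ∈ F := Finset.mem_of_max hm
  have hgm : greedy R S i = m := by
    rw [greedy_eq', ← hF, hm]; rfl
  rw [hF, Finset.mem_filter] at hmF
  rw [hgm]
  exact ⟨hmF.1, hmF.2.1, hmF.2.2⟩

lemma greedy_inj (R S : Finset ℕ) (h : TableauCond R S) {i i' : ℕ} (hi : i ∈ S)
    (hi' : i' ∈ S) (heq : greedy R S i = greedy R S i') : i = i' := by
  by_contra hne
  rcases lt_or_gt_of_ne hne with hlt | hlt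
  · exact (greedy_spec R S h hi').2.2 i hi hlt heq.symm
  · exact (greedy_spec R S h hi).2.2 i' hi' hlt heq

lemma mem_arcsOf {R S : Finset ℕ} {a : ℕ × ℕ} :
    a ∈ arcsOf R S ↔ ∃ i ∈ S, a = (greedy R S i, i) := by
  simp [arcsOf, eq_comm]

lemma deltaDepth_eq (A : Finset (ℕ × ℕ)) (i : ℕ) :
    deltaDepth A i = ((A.filter fun a => a.1 = i ∧ i < a.2).card : ℤ)
      - ((A.filter fun a => a.1 < i ∧ a.2 = i).card : ℤ) := by
  classical
  have hplus : dPlus A i = (A.filter fun a => a.1 = i ∧ i < a.2).card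
      + (A.filter fun a => a.1 < i ∧ i < a.2).card := by
    rw [dPlus, ← Finset.card_union_of_disjoint, ← Finset.filter_or]
    · apply congrArg
      apply Finset.filter_congr
      intro a _
      constructor
      · rintro ⟨h1, h2⟩
        rcases eq_or_lt_of_le h1 with rfl | hlt
        · exact Or.inl ⟨rfl, h2⟩
        · exact Or.inr ⟨hlt, h2⟩
      · rintro (⟨h1, h2⟩ | ⟨h1, h2⟩)
        · exact ⟨le_of_eq h1, h2⟩
        · exact ⟨le_of_lt h1, h2⟩
    · rw [Finset.disjoint_left]
      rintro a ha hb
      rw [Finset.mem_filter] at ha hb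
      omega
  have hminus : dMinus A i = (A.filter fun a => a.1 < i ∧ i < a.2).card
      + (A.filter fun a => a.1 < i ∧ a.2 = i).card := by
    rw [dMinus, ← Finset.card_union_of_disjoint, ← Finset.filter_or]
    · apply congrArg
      apply Finset.filter_congr
      intro a _
      constructor
      · rintro ⟨h1, h2⟩
        rcases lt_or_eq_of_le h2 with hlt | heq
        · exact Or.inl ⟨h1, hlt⟩
        · exact Or.inr ⟨h1, heq.symm⟩
      · rintro (⟨h1, h2⟩ | ⟨h1, h2⟩)
        · exact ⟨h1, le_of_lt h2⟩
        · exact ⟨h1, le_of_eq h2.symm⟩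
    · rw [Finset.disjoint_left]
      rintro a ha hb
      rw [Finset.mem_filter] at ha hb
      omega
  rw [deltaDepth, hplus, hminus]
  push_cast
  ring

end Helpers

/-- Circle-depth differences across the boundary vertices of the m-diagram of a three-row
standard Young tableau: depth increases by 1 at the first boundary vertex of an m or of an
isolated arc, is constant at the second boundary vertex of an m, and decreases by 1 at the
last boundary vertex of an m or of an isolated arc. -/
theorem deltaDepth_on_ms (N : ℕ) (B M T : Finset ℕ) (h : ThreeRowSYT N B M T) :
    (∀ i, (∃ j ∈ M, greedy B M j = i) →
        deltaDepth (arcsOf B M ∪ arcsOf M T) i = 1) ∧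
    (∀ j ∈ M, (∃ k ∈ T, greedy M T k = j) →
        deltaDepth (arcsOf B M ∪ arcsOf M T) j = 0) ∧
    (∀ k, (k ∈ T ∨ (k ∈ M ∧ ∀ t ∈ T, greedy M T t ≠ k)) →
        deltaDepth (arcsOf B M ∪ arcsOf M T) k = -1) := by
  obtain ⟨hBM, hBT, hMT, -, -, -, tc1, tc2⟩ := h
  have hmemA : ∀ a : ℕ × ℕ, a ∈ arcsOf B M ∪ arcsOf M T ↔
      ((∃ j ∈ M, a = (greedy B M j, j)) ∨ (∃ k ∈ T, a = (greedy M T k, k))) := by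
    intro a
    rw [Finset.mem_union, mem_arcsOf, mem_arcsOf]
  refine ⟨?_, ?_, ?_⟩
  · rintro i ⟨j, hjM, rfl⟩
    rw [deltaDepth_eq]
    have hiB : greedy B M j ∈ B := (greedy_spec B M tc1 hjM).1
    have hij : greedy B M j < j := (greedy_spec B M tc1 hjM).2.1
    have e1 : ((arcsOf B M ∪ arcsOf M T).filter
        fun a => a.1 = greedy B M j ∧ greedy B M j < a.2) = {(greedy B M j, j)} := by
      apply Finset.eq_singleton_iff_unique_mem.mpr
      constructor
      · rw [Finset.mem_filter]
        exact ⟨(hmemA _).mpr (Or.inl ⟨j, hjM, rfl⟩), rfl, hij⟩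
      · rintro a ha
        rw [Finset.mem_filter] at ha
        rcases (hmemA a).mp ha.1 with ⟨j', hj', rfl⟩ | ⟨k, hk, rfl⟩
        · have : j' = j := greedy_inj B M tc1 hj' hjM ha.2.1
          subst this; rfl
        · exfalso
          have h1 : greedy M T k ∈ M := (greedy_spec M T tc2 hk).1
          have h2 : greedy M T k = greedy B M j := ha.2.1
          rw [h2] at h1
          exact Finset.disjoint_left.mp hBM hiB h1
    have e2 : ((arcsOf B M ∪ arcsOf M T).filter
        fun a => a.1 < greedy B M j ∧ a.2 = greedy B M j) = ∅ := by
      apply Finset.filter_eq_empty_iff.mpr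
      intro a ha
      rcases (hmemA a).mp ha with ⟨j', hj', rfl⟩ | ⟨k, hk, rfl⟩
      · rintro ⟨-, h2⟩
        have : j' ∈ B := by rw [show j' = greedy B M j from h2]; exact hiB
        exact Finset.disjoint_left.mp hBM this hj'
      · rintro ⟨-, h2⟩
        have : k ∈ B := by rw [show k = greedy B M j from h2]; exact hiB
        exact Finset.disjoint_left.mp hBT this hk
    rw [e1, e2]
    simp
  · rintro j hjM ⟨k, hkT, hkj⟩
    rw [deltaDepth_eq]
    have hjk : j < k := by
      have := (greedy_spec M T tc2 hkT).2.1
      omega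
    have hBj : greedy B M j < j := (greedy_spec B M tc1 hjM).2.1
    have e1 : ((arcsOf B M ∪ arcsOf M T).filter
        fun a => a.1 = j ∧ j < a.2) = {(j, k)} := by
      apply Finset.eq_singleton_iff_unique_mem.mpr
      constructor
      · rw [Finset.mem_filter]
        refine ⟨(hmemA _).mpr (Or.inr ⟨k, hkT, by rw [hkj]⟩), rfl, hjk⟩
      · rintro a ha
        rw [Finset.mem_filter] at ha
        rcases (hmemA a).mp ha.1 with ⟨j', hj', rfl⟩ | ⟨k', hk', rfl⟩
        · exfalso
          have h1 : greedy B M j' ∈ B := (greedy_spec B M tc1 hj').1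
          have h2 : greedy B M j' = j := ha.2.1
          rw [h2] at h1
          exact Finset.disjoint_left.mp hBM h1 hjM
        · have h2 : greedy M T k' = j := ha.2.1
          have : k' = k := greedy_inj M T tc2 hk' hkT (by rw [h2, hkj])
          subst this
          rw [h2]
    have e2 : ((arcsOf B M ∪ arcsOf M T).filter
        fun a => a.1 < j ∧ a.2 = j) = {(greedy B M j, j)} := by
      apply Finset.eq_singleton_iff_unique_mem.mpr
      constructor
      · rw [Finset.mem_filter]
        exact ⟨(hmemA _).mpr (Or.inl ⟨j, hjM, rfl⟩), hBj, rfl⟩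
      · rintro a ha
        rw [Finset.mem_filter] at ha
        rcases (hmemA a).mp ha.1 with ⟨j', hj', rfl⟩ | ⟨k', hk', rfl⟩
        · have h2 : j' = j := ha.2.2
          subst h2; rfl
        · exfalso
          have h2 : k' = j := ha.2.2
          rw [h2] at hk'
          exact Finset.disjoint_right.mp hMT hk' hjM
    rw [e1, e2]
    simp
  · rintro k (hkT | ⟨hkM, hknot⟩)
    · rw [deltaDepth_eq]
      have hMk : greedy M T k < k := (greedy_spec M T tc2 hkT).2.1
      have e1 : ((arcsOf B M ∪ arcsOf M T).filter
          fun a => a.1 = k ∧ k < a.2) = ∅ := by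
        apply Finset.filter_eq_empty_iff.mpr
        intro a ha
        rcases (hmemA a).mp ha with ⟨j', hj', rfl⟩ | ⟨k', hk', rfl⟩
        · rintro ⟨h1, -⟩
          have : greedy B M j' ∈ B := (greedy_spec B M tc1 hj').1
          rw [show greedy B M j' = k from h1] at this
          exact Finset.disjoint_left.mp hBT this hkT
        · rintro ⟨h1, -⟩
          have : greedy M T k' ∈ M := (greedy_spec M T tc2 hk').1
          rw [show greedy M T k' = k from h1] at this
          exact Finset.disjoint_left.mp hMT this hkT
      have e2 : ((arcsOf B M ∪ arcsOf M T).filter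
          fun a => a.1 < k ∧ a.2 = k) = {(greedy M T k, k)} := by
        apply Finset.eq_singleton_iff_unique_mem.mpr
        constructor
        · rw [Finset.mem_filter]
          exact ⟨(hmemA _).mpr (Or.inr ⟨k, hkT, rfl⟩), hMk, rfl⟩
        · rintro a ha
          rw [Finset.mem_filter] at ha
          rcases (hmemA a).mp ha.1 with ⟨j', hj', rfl⟩ | ⟨k', hk', rfl⟩
          · exfalso
            have h2 : j' = k := ha.2.2
            rw [h2] at hj'
            exact Finset.disjoint_left.mp hMT hj' hkT
          · have h2 : k' = k := ha.2.2
            subst h2; rfl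
      rw [e1, e2]
      simp
    · rw [deltaDepth_eq]
      have hBk : greedy B M k < k := (greedy_spec B M tc1 hkM).2.1
      have e1 : ((arcsOf B M ∪ arcsOf M T).filter
          fun a => a.1 = k ∧ k < a.2) = ∅ := by
        apply Finset.filter_eq_empty_iff.mpr
        intro a ha
        rcases (hmemA a).mp ha with ⟨j', hj', rfl⟩ | ⟨k', hk', rfl⟩
        · rintro ⟨h1, -⟩
          have : greedy B M j' ∈ B := (greedy_spec B M tc1 hj').1
          rw [show greedy B M j' = k from h1] at this
          exact Finset.disjoint_left.mp hBM this hkM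
        · rintro ⟨h1, -⟩
          exact hknot k' hk' h1
      have e2 : ((arcsOf B M ∪ arcsOf M T).filter
          fun a => a.1 < k ∧ a.2 = k) = {(greedy B M k, k)} := by
        apply Finset.eq_singleton_iff_unique_mem.mpr
        constructor
        · rw [Finset.mem_filter]
          exact ⟨(hmemA _).mpr (Or.inl ⟨k, hkM, rfl⟩), hBk, rfl⟩
        · rintro a ha
          rw [Finset.mem_filter] at ha
          rcases (hmemA a).mp ha.1 with ⟨j', hj', rfl⟩ | ⟨k', hk', rfl⟩
          · have h2 : j' = k := ha.2.2
            subst h2; rfl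
          · exfalso
            have h2 : k' = k := ha.2.2
            rw [h2] at hk'
            exact Finset.disjoint_right.mp hMT hk' hkM
      rw [e1, e2]
      simp
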